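/- For every finite two-player turn-based game tree (possibly with chance nodes) and every node s, the set of pairs (follower expected utility, leader expected utility) achievable by incentive-compatible correlated commitments in the subgame rooted at s is a convex subset of ℝ². -/
import Mathlib


open scoped BigOperators Classical

noncomputable section

/-- A finite two-player turn-based game tree, with a constructor for chance nodes:
every internal node belongs to the leader (player 1), to the follower (player 2), or is a
chance node equipped with a probability distribution over its children, and every leaf
carries real utilities `(u1, u2)` of the leader and the follower. -/
inductive TBT : Type
  | leaf (u1 u2 : ℝ) : TBT
  | leader (n : ℕ) (ch : Fin (n + 1) → TBT) : TBT
  | follower (n : ℕ) (ch : Fin (n + 1) → TBT) : TBT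
  | chance (n : ℕ) (p : Fin (n + 1) → ℝ) (ch : Fin (n + 1) → TBT) : TBT

namespace TBT

/-- The game tree has no chance nodes. -/
def NoChance : TBT → Prop
  | .leaf _ _ => True
  | .leader _ ch => ∀ i, NoChance (ch i)
  | .follower _ ch => ∀ i, NoChance (ch i)
  | .chance _ _ _ => False

/-- The chance probabilities form probability distributions. -/
def ValidChance : TBT → Prop
  | .leaf _ _ => True
  | .leader _ ch => ∀ i, ValidChance (ch i)
  | .follower _ ch => ∀ i, ValidChance (ch i)
  | .chance _ p ch => (∀ i, 0 ≤ p i) ∧ (∑ i, p i) = 1 ∧ ∀ i, ValidChance (ch i)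

/-- Pure strategies of the leader: a choice of child at every leader node. -/
def LS : TBT → Type
  | .leaf _ _ => PUnit
  | .leader n ch => Fin (n + 1) × ((i : Fin (n + 1)) → LS (ch i))
  | .follower n ch => (i : Fin (n + 1)) → LS (ch i)
  | .chance n _ ch => (i : Fin (n + 1)) → LS (ch i)

/-- Pure strategies of the follower: a choice of child at every follower node. -/
def FS : TBT → Type
  | .leaf _ _ => PUnit
  | .leader n ch => (i : Fin (n + 1)) → FS (ch i)
  | .follower n ch => Fin (n + 1) × ((i : Fin (n + 1)) → FS (ch i))
  | .chance n _ ch => (i : Fin (n + 1)) → FS (ch i)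

instance fintypeLS : (t : TBT) → Fintype (LS t)
  | .leaf _ _ => inferInstanceAs (Fintype PUnit)
  | .leader n ch =>
    haveI : ∀ i, Fintype (LS (ch i)) := fun i => fintypeLS (ch i)
    inferInstanceAs (Fintype (Fin (n + 1) × ((i : Fin (n + 1)) → LS (ch i))))
  | .follower n ch =>
    haveI : ∀ i, Fintype (LS (ch i)) := fun i => fintypeLS (ch i)
    inferInstanceAs (Fintype ((i : Fin (n + 1)) → LS (ch i)))
  | .chance n _ ch =>
    haveI : ∀ i, Fintype (LS (ch i)) := fun i => fintypeLS (ch i)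
    inferInstanceAs (Fintype ((i : Fin (n + 1)) → LS (ch i)))

instance fintypeFS : (t : TBT) → Fintype (FS t)
  | .leaf _ _ => inferInstanceAs (Fintype PUnit)
  | .leader n ch =>
    haveI : ∀ i, Fintype (FS (ch i)) := fun i => fintypeFS (ch i)
    inferInstanceAs (Fintype ((i : Fin (n + 1)) → FS (ch i)))
  | .follower n ch =>
    haveI : ∀ i, Fintype (FS (ch i)) := fun i => fintypeFS (ch i)
    inferInstanceAs (Fintype (Fin (n + 1) × ((i : Fin (n + 1)) → FS (ch i))))
  | .chance n _ ch =>
    haveI : ∀ i, Fintype (FS (ch i)) := fun i => fintypeFS (ch i)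
    inferInstanceAs (Fintype ((i : Fin (n + 1)) → FS (ch i)))

/-- The expected utilities `(u1, u2)` obtained when the players follow a pure strategy
profile (the expectation is over the chance moves). -/
def playU : (t : TBT) → LS t → FS t → ℝ × ℝ
  | .leaf u1 u2, _, _ => (u1, u2)
  | .leader _ ch, π1, π2 => playU (ch π1.1) (π1.2 π1.1) (π2 π1.1)
  | .follower _ ch, π1, π2 => playU (ch π2.1) (π1 π2.1) (π2.2 π2.1)
  | .chance _ p ch, π1, π2 => ∑ i, p i • playU (ch i) (π1 i) (π2 i)

/-- `φ` is a probability distribution on pure strategy profiles. -/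
def IsDist (t : TBT) (φ : LS t → FS t → ℝ) : Prop :=
  (∀ π1 π2, 0 ≤ φ π1 π2) ∧ (∑ π1 : LS t, ∑ π2 : FS t, φ π1 π2) = 1

/-- Expected utilities `(u1, u2)` of a (correlated) distribution on pure strategy
profiles. -/
def EU (t : TBT) (φ : LS t → FS t → ℝ) : ℝ × ℝ :=
  ∑ π1 : LS t, ∑ π2 : FS t, φ π1 π2 • playU t π1 π2

/-- Incentive compatibility of a correlated commitment, stated recursively for the
(unnormalized) conditional weight on pure strategy profiles of each subgame:  at every
follower node and for every recommendation `b` there — the action prescribed at that node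
by the drawn follower strategy, conditioned on the play (i.e. the recommendations followed
so far, together with the leader's and chance's moves) having reached that node — the
follower cannot strictly increase his conditional expected utility, computed with respect
to the posterior on the leader's drawn strategy, by deviating to any action `b'` and
playing an arbitrary pure strategy `τ'` thereafter, the leader continuing to play her drawn
strategy. -/
def IC : (t : TBT) → (LS t → FS t → ℝ) → Prop
  | .leaf _ _, _ => True
  | .leader n ch, φ => ∀ i : Fin (n + 1), IC (ch i) (fun σ τ =>
      ∑ π1 : LS (.leader n ch), ∑ π2 : FS (.leader n ch),
        if π1.1 = i ∧ π1.2 i = σ ∧ π2 i = τ then φ π1 π2 else 0)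
  | .follower n ch, φ =>
      (∀ b b' : Fin (n + 1), ∀ τ' : FS (ch b'),
        (∑ π1 : LS (.follower n ch), ∑ π2 : FS (.follower n ch),
          if π2.1 = b then φ π1 π2 * (playU (ch b') (π1 b') τ').2 else 0) ≤
        (∑ π1 : LS (.follower n ch), ∑ π2 : FS (.follower n ch),
          if π2.1 = b then φ π1 π2 * (playU (ch b) (π1 b) (π2.2 b)).2 else 0)) ∧
      ∀ b : Fin (n + 1), IC (ch b) (fun σ τ =>
        ∑ π1 : LS (.follower n ch), ∑ π2 : FS (.follower n ch),
          if π2.1 = b ∧ π1 b = σ ∧ π2.2 b = τ then φ π1 π2 else 0)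
  | .chance n p ch, φ => ∀ i : Fin (n + 1), IC (ch i) (fun σ τ =>
      ∑ π1 : LS (.chance n p ch), ∑ π2 : FS (.chance n p ch),
        if π1 i = σ ∧ π2 i = τ then φ π1 π2 else 0)

/-- The set of pairs (follower expected utility, leader expected utility) achievable by
incentive-compatible correlated commitments in the game `t`. -/
def AchievableSet (t : TBT) : Set (ℝ × ℝ) :=
  {p | ∃ φ : LS t → FS t → ℝ, IsDist t φ ∧ IC t φ ∧ p = ((EU t φ).2, (EU t φ).1)}

/-- The set of leader expected utilities of incentive-compatible correlated commitments;
its greatest element is the leader's SEFCE value. -/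
def SEFCEvals (t : TBT) : Set ℝ :=
  {y | ∃ φ : LS t → FS t → ℝ, IsDist t φ ∧ IC t φ ∧ y = (EU t φ).1}

/-- The recursively defined sets `H_s` of utility pairs `(x, y)`, `x` the follower's and
`y` the leader's utility: a single point at a leaf; at a leader node the convex hull of the
children's sets; at a follower node the convex hull of the union of the restricted sets
`Ĥ_w = H_w ∩ {(x,y) : x ≥ max_{w'≠w} min_{p'∈H_{w'}} p'.1}`; and at a chance node the
weighted Minkowski sum of the children's sets. -/
def Hset : TBT → Set (ℝ × ℝ)
  | .leaf u1 u2 => {(u2, u1)}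
  | .leader _ ch => convexHull ℝ (⋃ i, Hset (ch i))
  | .follower _ ch => convexHull ℝ
      (⋃ i, {p ∈ Hset (ch i) | ∀ j, j ≠ i → sInf (Prod.fst '' Hset (ch j)) ≤ p.1})
  | .chance n p ch =>
      {q | ∃ f : Fin (n + 1) → ℝ × ℝ, (∀ i, f i ∈ Hset (ch i)) ∧ q = ∑ i, p i • f i}

lemma sum_if_comb {α β : Type*} [Fintype α] [Fintype β] (P : α → β → Prop)
    (a b : ℝ) (f g : α → β → ℝ) :
    (∑ x : α, ∑ y : β, if P x y then a * f x y + b * g x y else 0) =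
      a * (∑ x : α, ∑ y : β, if P x y then f x y else 0) +
      b * (∑ x : α, ∑ y : β, if P x y then g x y else 0) := by
  simp only [Finset.mul_sum, mul_ite, mul_zero, ← Finset.sum_add_distrib,
    ite_add_ite, add_zero]

set_option maxHeartbeats 1000000 in
lemma IC_comb : ∀ (t : TBT) (a b : ℝ) (φ φ' : LS t → FS t → ℝ), 0 ≤ a → 0 ≤ b →
    IC t φ → IC t φ' → IC t (fun σ τ => a * φ σ τ + b * φ' σ τ)
  | .leaf _ _, _, _, _, _, _, _, _, _ => trivial
  | .leader n ch, a, b, φ, φ', ha, hb, h, h' => by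
    intro i
    have key : (fun σ τ => ∑ π1 : LS (.leader n ch), ∑ π2 : FS (.leader n ch),
        if π1.1 = i ∧ π1.2 i = σ ∧ π2 i = τ then a * φ π1 π2 + b * φ' π1 π2 else 0) =
        fun σ τ =>
          a * (∑ π1 : LS (.leader n ch), ∑ π2 : FS (.leader n ch),
            if π1.1 = i ∧ π1.2 i = σ ∧ π2 i = τ then φ π1 π2 else 0) +
          b * (∑ π1 : LS (.leader n ch), ∑ π2 : FS (.leader n ch),
            if π1.1 = i ∧ π1.2 i = σ ∧ π2 i = τ then φ' π1 π2 else 0) := by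
      funext σ τ
      simp only [Finset.mul_sum, mul_ite, mul_zero, ← Finset.sum_add_distrib,
        ite_add_ite, add_zero]
    rw [key]
    exact IC_comb (ch i) a b _ _ ha hb (h i) (h' i)
  | .follower n ch, a, b, φ, φ', ha, hb, h, h' => by
    constructor
    · intro c c' τ'
      have e1 : (∑ π1 : LS (.follower n ch), ∑ π2 : FS (.follower n ch),
          if π2.1 = c then (a * φ π1 π2 + b * φ' π1 π2) * (playU (ch c') (π1 c') τ').2
          else 0) =
          a * (∑ π1 : LS (.follower n ch), ∑ π2 : FS (.follower n ch),
            if π2.1 = c then φ π1 π2 * (playU (ch c') (π1 c') τ').2 else 0) +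
          b * (∑ π1 : LS (.follower n ch), ∑ π2 : FS (.follower n ch),
            if π2.1 = c then φ' π1 π2 * (playU (ch c') (π1 c') τ').2 else 0) := by
        simp only [add_mul, mul_assoc, Finset.mul_sum, mul_ite, mul_zero,
          ← Finset.sum_add_distrib, ite_add_ite, add_zero]
      have e2 : (∑ π1 : LS (.follower n ch), ∑ π2 : FS (.follower n ch),
          if π2.1 = c then (a * φ π1 π2 + b * φ' π1 π2) * (playU (ch c) (π1 c) (π2.2 c)).2
          else 0) =
          a * (∑ π1 : LS (.follower n ch), ∑ π2 : FS (.follower n ch),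
            if π2.1 = c then φ π1 π2 * (playU (ch c) (π1 c) (π2.2 c)).2 else 0) +
          b * (∑ π1 : LS (.follower n ch), ∑ π2 : FS (.follower n ch),
            if π2.1 = c then φ' π1 π2 * (playU (ch c) (π1 c) (π2.2 c)).2 else 0) := by
        simp only [add_mul, mul_assoc, Finset.mul_sum, mul_ite, mul_zero,
          ← Finset.sum_add_distrib, ite_add_ite, add_zero]
      rw [e1, e2]
      exact add_le_add (mul_le_mul_of_nonneg_left (h.1 c c' τ') ha)
        (mul_le_mul_of_nonneg_left (h'.1 c c' τ') hb)
    · intro c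
      have key : (fun σ τ => ∑ π1 : LS (.follower n ch), ∑ π2 : FS (.follower n ch),
          if π2.1 = c ∧ π1 c = σ ∧ π2.2 c = τ then a * φ π1 π2 + b * φ' π1 π2 else 0) =
          fun σ τ =>
            a * (∑ π1 : LS (.follower n ch), ∑ π2 : FS (.follower n ch),
              if π2.1 = c ∧ π1 c = σ ∧ π2.2 c = τ then φ π1 π2 else 0) +
            b * (∑ π1 : LS (.follower n ch), ∑ π2 : FS (.follower n ch),
              if π2.1 = c ∧ π1 c = σ ∧ π2.2 c = τ then φ' π1 π2 else 0) := by
        funext σ τ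
        simp only [Finset.mul_sum, mul_ite, mul_zero, ← Finset.sum_add_distrib,
          ite_add_ite, add_zero]
      rw [key]
      exact IC_comb (ch c) a b _ _ ha hb (h.2 c) (h'.2 c)
  | .chance n p ch, a, b, φ, φ', ha, hb, h, h' => by
    intro i
    have key : (fun σ τ => ∑ π1 : LS (.chance n p ch), ∑ π2 : FS (.chance n p ch),
        if π1 i = σ ∧ π2 i = τ then a * φ π1 π2 + b * φ' π1 π2 else 0) =
        fun σ τ =>
          a * (∑ π1 : LS (.chance n p ch), ∑ π2 : FS (.chance n p ch),
            if π1 i = σ ∧ π2 i = τ then φ π1 π2 else 0) +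
          b * (∑ π1 : LS (.chance n p ch), ∑ π2 : FS (.chance n p ch),
            if π1 i = σ ∧ π2 i = τ then φ' π1 π2 else 0) := by
      funext σ τ
      simp only [Finset.mul_sum, mul_ite, mul_zero, ← Finset.sum_add_distrib,
        ite_add_ite, add_zero]
    rw [key]
    exact IC_comb (ch i) a b _ _ ha hb (h i) (h' i)

lemma EU_comb (t : TBT) (a b : ℝ) (φ φ' : LS t → FS t → ℝ) :
    EU t (fun σ τ => a * φ σ τ + b * φ' σ τ) = a • EU t φ + b • EU t φ' := by
  simp only [EU, add_smul, mul_smul, Finset.sum_add_distrib, Finset.smul_sum]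

/-- For every finite two-player turn-based game tree (possibly with
chance nodes) and every node (here: the root of every subgame), the set of pairs
(follower expected utility, leader expected utility) achievable by incentive-compatible
correlated commitments in the subgame rooted at that node is a convex subset of `ℝ²`. -/
theorem achievableSet_convex (t : TBT) (hvc : ValidChance t) :
    Convex ℝ (AchievableSet t) := by
  rintro p ⟨φ, ⟨hφ0, hφ1⟩, hicφ, rfl⟩ q ⟨φ', ⟨hφ'0, hφ'1⟩, hicφ', rfl⟩ a b ha hb hab
  refine ⟨fun σ τ => a * φ σ τ + b * φ' σ τ, ⟨fun σ τ =>
    add_nonneg (mul_nonneg ha (hφ0 σ τ)) (mul_nonneg hb (hφ'0 σ τ)), ?_⟩,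
    IC_comb t a b φ φ' ha hb hicφ hicφ', ?_⟩
  · simp only [Finset.sum_add_distrib, ← Finset.mul_sum, hφ1, hφ'1, mul_one, hab]
  · rw [EU_comb]
    simp [Prod.ext_iff, Prod.smul_def, smul_eq_mul]

end TBT
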